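/- Let F be a generic step skew product over a transitive subshift of finite type and μ an ergodic stationary measure of the associated random walk Π(F). Then for any two symbols k, k' and any ε > 0 there exist admissible compositions G_A, G_B : I_k → I_{k'} such that G_A(I_{μ,k}) ⊆ U_ε(A_{μ,k'}) and G_B(I_{μ,k}) ⊆ U_ε(B_{μ,k'}), where U_ε denotes the ε-neighborhood. -/

import Mathlib

open MeasureTheory Set Filter Topology
open scoped ENNReal

namespace PaperSSP

/-- Data of a step skew product over a transitive subshift of finite type, together with
the transition probabilities and stationary distribution defining a Markov measure. -/
structure Sys (N : ℕ) where
  /-- transition (0-1) matrix of the subshift -/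
  A : Fin N → Fin N → Bool
  /-- fiber maps -/
  f : Fin N → ℝ → ℝ
  /-- stochastic transition matrix -/
  P : Fin N → Fin N → ℝ
  /-- stationary distribution -/
  p : Fin N → ℝ
  transitive : ∃ n : ℕ, 0 < n ∧ ∀ i j : Fin N,
    0 < (((Matrix.of fun i j => if A i j then (1 : ℕ) else 0)) ^ n) i j
  f_meas : ∀ k, Measurable (f k)
  f_contDiff : ∀ k, ContDiffOn ℝ 1 (f k) (Icc 0 1)
  f_mono : ∀ k, StrictMonoOn (f k) (Icc 0 1)
  f_deriv_pos : ∀ k, ∀ x ∈ Icc (0:ℝ) 1, 0 < derivWithin (f k) (Icc 0 1) x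
  f_into : ∀ k, MapsTo (f k) (Icc 0 1) (Ioo 0 1)
  P_nonneg : ∀ i j, 0 ≤ P i j
  P_row : ∀ i, ∑ j, P i j = 1
  P_pos_iff : ∀ i j, (0 < P i j ↔ A i j = true)
  p_nonneg : ∀ i, 0 ≤ p i
  p_sum : ∑ i, p i = 1
  p_stationary : ∀ j, ∑ i, P i j * p i = p j

variable {N : ℕ}

/-- The two-sided shift space `Σ`. -/
abbrev Sig (S : Sys N) : Type := {ω : ℤ → Fin N // ∀ n : ℤ, S.A (ω n) (ω (n + 1)) = true}

/-- The left shift `σ` on `Σ`. -/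
def shift (S : Sys N) (ω : Sig S) : Sig S := ⟨fun n => ω.1 (n + 1), fun n => ω.2 (n + 1)⟩

/-- The step skew product `F (ω, x) = (σ ω, f_{ω₀} x)`. -/
def Fmap (S : Sys N) : Sig S × ℝ → Sig S × ℝ := fun q => (shift S q.1, S.f (q.1.1 0) q.2)

/-- `ν` is the Markov measure on `Σ` given by the cylinder formula. -/
def IsMarkovMeasure (S : Sys N) (ν : Measure (Sig S)) : Prop :=
  IsProbabilityMeasure ν ∧
  ∀ k m : ℤ, k ≤ m → ∀ w : ℤ → Fin N,
    ν {ω : Sig S | ∀ i : ℤ, k ≤ i → i ≤ m → ω.1 i = w i} =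
      ENNReal.ofReal (S.p (w k) * ∏ i ∈ Finset.Icc k (m - 1), S.P (w i) (w (i + 1)))

/-- Admissibility of a pair of symbols. -/
def Adm (S : Sys N) (i j : Fin N) : Prop := S.A i j = true

/-- The composition `f_{w_n} ∘ ⋯ ∘ f_{w_1}` along a word `l = [w_1, …, w_n]`. -/
def wordMap (S : Sys N) (l : List (Fin N)) : ℝ → ℝ := fun x => l.foldl (fun y k => S.f k y) x

/-- A simple return: an admissible word `w_1 … w_n` of pairwise distinct symbols with
`(w_n, w_1)` admissible; its map is `wordMap` of the word. -/
def IsSimpleReturn (S : Sys N) (l : List (Fin N)) : Prop :=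
  l.Nodup ∧ l.Chain' (Adm S) ∧ ∃ a b, l.head? = some a ∧ l.getLast? = some b ∧ Adm S b a

/-- A simple transition: an admissible word `w_1 … w_{n+1}` (n ≥ 1) of pairwise distinct
symbols; its map is `transMap`, going from `I_{w_1}` to `I_{w_{n+1}}`. -/
def IsSimpleTransition (S : Sys N) (t : List (Fin N)) : Prop :=
  2 ≤ t.length ∧ t.Nodup ∧ t.Chain' (Adm S)

/-- The map `f_{w_n} ∘ ⋯ ∘ f_{w_1}` of the transition word `t = w_1 … w_{n+1}`. -/
def transMap (S : Sys N) (t : List (Fin N)) : ℝ → ℝ := wordMap S t.dropLast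

/-- Attracting (hyperbolic) fixed point. -/
def IsAttrFP (g : ℝ → ℝ) (x : ℝ) : Prop := g x = x ∧ deriv g x < 1

/-- Repelling (hyperbolic) fixed point. -/
def IsRepFP (g : ℝ → ℝ) (x : ℝ) : Prop := g x = x ∧ 1 < deriv g x

/-- The genericity conditions (1)–(3). -/
def IsGeneric (S : Sys N) : Prop :=
  (∀ l, IsSimpleReturn S l → ∀ x ∈ Icc (0:ℝ) 1, wordMap S l x = x →
      deriv (wordMap S l) x ≠ 1) ∧
  (∀ l t l', IsSimpleReturn S l → IsSimpleTransition S t → IsSimpleReturn S l' →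
      t.head? = l.head? → t.getLast? = l'.head? → ∀ x ∈ Icc (0:ℝ) 1,
      (IsAttrFP (wordMap S l) x → ¬ IsRepFP (wordMap S l') (transMap S t x)) ∧
      (IsRepFP (wordMap S l) x → ¬ IsAttrFP (wordMap S l') (transMap S t x))) ∧
  ¬ ∃ a : Fin N → ℝ, (∀ k, a k ∈ Icc (0:ℝ) 1) ∧ ∀ i j, Adm S i j → S.f i (a i) = a j

/-- The strip between two graphs. -/
def Strip (S : Sys N) (φ₁ φ₂ : Sig S → ℝ) : Set (Sig S × ℝ) :=
  {q | φ₁ q.1 ≤ q.2 ∧ q.2 ≤ φ₂ q.1}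

/-- A strip `S_{φ₁, φ₂}` with `φ₁ < φ₂` continuous, `I`-valued. -/
def IsStrip (S : Sys N) (T : Set (Sig S × ℝ)) : Prop :=
  ∃ φ₁ φ₂ : Sig S → ℝ, Continuous φ₁ ∧ Continuous φ₂ ∧ (∀ ω, φ₁ ω ∈ Icc (0:ℝ) 1) ∧
    (∀ ω, φ₂ ω ∈ Icc (0:ℝ) 1) ∧ (∀ ω, φ₁ ω < φ₂ ω) ∧ T = Strip S φ₁ φ₂

/-- Trapping strip: `F(S) ⊆ int S`. -/
def IsTrappingStrip (S : Sys N) (T : Set (Sig S × ℝ)) : Prop :=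
  IsStrip S T ∧ Fmap S '' T ⊆ interior T

/-- Inverse trapping strip: `F⁻¹(S) ⊆ int S`. -/
def IsInvTrappingStrip (S : Sys N) (T : Set (Sig S × ℝ)) : Prop :=
  IsStrip S T ∧ Fmap S ⁻¹' T ⊆ interior T

/-- The maximal attractor `⋂ₙ Fⁿ(T)` of a (trapping) strip. -/
def Amax (S : Sys N) (T : Set (Sig S × ℝ)) : Set (Sig S × ℝ) := ⋂ n : ℕ, (Fmap S)^[n] '' T

/-- The repeller `⋂ₙ F⁻ⁿ(T)` of an (inverse trapping) strip. -/
def Repel (S : Sys N) (T : Set (Sig S × ℝ)) : Set (Sig S × ℝ) := ⋂ n : ℕ, (Fmap S)^[n] ⁻¹' T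

/-- The metric `d(ω, ω') = 2^{-min{|n| : ωₙ ≠ ω'ₙ}}` on `Σ`. -/
noncomputable def dS (S : Sys N) (ω ω' : Sig S) : ℝ :=
  letI := Classical.propDecidable (ω = ω')
  if ω = ω' then 0
  else (2:ℝ) ^ (-((sInf {k : ℕ | ∃ n : ℤ, n.natAbs = k ∧ ω.1 n ≠ ω'.1 n} : ℕ) : ℤ))

/-- The fiber `B_ω` of a subset of `Σ × ℝ`. -/
def fiber {S : Sys N} (B : Set (Sig S × ℝ)) (ω : Sig S) : Set ℝ := {x | (ω, x) ∈ B}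

/-- A bony graph w.r.t. `ν`: closed, every fiber a closed interval, a.e. fiber a point. -/
def IsBony (S : Sys N) (ν : Measure (Sig S)) (B : Set (Sig S × ℝ)) : Prop :=
  IsClosed B ∧ (∀ ω, ∃ a b : ℝ, a ≤ b ∧ fiber B ω = Icc a b) ∧
  ∀ᵐ ω ∂ν, ∃ x, fiber B ω = {x}

/-- A continuous-bony graph: a bony graph with upper-semicontinuous fibers. -/
def IsCBG (S : Sys N) (ν : Measure (Sig S)) (B : Set (Sig S × ℝ)) : Prop :=
  IsBony S ν B ∧ ∀ ω : Sig S, ∀ ε > (0:ℝ), ∃ δ > (0:ℝ), ∀ ω', dS S ω ω' < δ →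
    ∀ x ∈ fiber B ω', ∃ y ∈ fiber B ω, |x - y| < ε

/-- The standard measure: product of `ν` with Lebesgue measure on the fiber. -/
noncomputable def stdMeas (S : Sys N) (ν : Measure (Sig S)) : Measure (Sig S × ℝ) :=
  ν.prod (volume.restrict (Icc 0 1))

/-- A stationary measure of the random walk `Π(F)`, as a family `μ_k` of measures
on the fibers with total mass 1, supported on `I`, with `∑ᵢ π_{ij} (f_i)_* μ_i = μ_j`. -/
def IsStationary (S : Sys N) (μ : Fin N → Measure ℝ) : Prop :=
  (∀ k, IsFiniteMeasure (μ k)) ∧ (∑ k, μ k univ) = 1 ∧ (∀ k, μ k (Icc (0:ℝ) 1)ᶜ = 0) ∧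
  ∀ j, μ j = ∑ i, ENNReal.ofReal (S.P i j) • (μ i).map (S.f i)

/-- Ergodic stationary measure: an extreme point of the convex set of stationary measures. -/
def IsErgodicStationary (S : Sys N) (μ : Fin N → Measure ℝ) : Prop :=
  IsStationary S μ ∧ ∀ μ₁ μ₂ : Fin N → Measure ℝ, IsStationary S μ₁ → IsStationary S μ₂ →
    ∀ t : ℝ≥0∞, 0 < t → t < 1 → (∀ k, μ k = t • μ₁ k + (1 - t) • μ₂ k) → μ₁ = μ₂

/-- The (topological) support of a measure on `ℝ`. -/
def msupport (m : Measure ℝ) : Set ℝ := {x | ∀ ε > (0:ℝ), 0 < m (Ioo (x - ε) (x + ε))}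

/-- `A_{μ,k} = min supp μ_k`. -/
noncomputable def Alow (m : Measure ℝ) : ℝ := sInf (msupport m)

/-- `B_{μ,k} = max supp μ_k`. -/
noncomputable def Bhigh (m : Measure ℝ) : ℝ := sSup (msupport m)

/-- A domain: a disjoint union of nonempty subintervals `D_k ⊆ I_k`. -/
def IsDomain {N : ℕ} (D : Fin N → Set ℝ) : Prop :=
  ∀ k, (D k).Nonempty ∧ (D k).OrdConnected ∧ D k ⊆ Icc 0 1

/-- A trapping domain: `f_k(D_k) ⊆ int D_m` for all admissible `(k, m)`. -/
def IsTrappingDomain (S : Sys N) (D : Fin N → Set ℝ) : Prop :=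
  IsDomain D ∧ ∀ k m, Adm S k m → S.f k '' D k ⊆ interior (D m)

/-- A nonstrictly trapping domain: `f_k(D_k) ⊆ D_m` for all admissible `(k, m)`. -/
def IsNSTrappingDomain (S : Sys N) (D : Fin N → Set ℝ) : Prop :=
  IsDomain D ∧ ∀ k m, Adm S k m → S.f k '' D k ⊆ D m

/-- The one-sided shift space `Σ₊`. -/
abbrev Sig1 (S : Sys N) : Type := {ω : ℕ → Fin N // ∀ n : ℕ, S.A (ω n) (ω (n + 1)) = true}

/-- The one-sided left shift. -/
def shift1 (S : Sys N) (ω : Sig1 S) : Sig1 S := ⟨fun n => ω.1 (n + 1), fun n => ω.2 (n + 1)⟩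

/-- The one-sided skew product `F₊`. -/
def Fmap1 (S : Sys N) : Sig1 S × ℝ → Sig1 S × ℝ := fun q => (shift1 S q.1, S.f (q.1.1 0) q.2)

/-- The "forgetting the past" projection `π : Σ → Σ₊`. -/
def forget (S : Sys N) (ω : Sig S) : Sig1 S :=
  ⟨fun n => ω.1 n, fun n => by push_cast; exact ω.2 (n : ℤ)⟩

/-- The basin of a measure `m`: points whose time averages converge to `m`. -/
def Basin (S : Sys N) (m : Measure (Sig S × ℝ)) : Set (Sig S × ℝ) :=
  {q | ∀ g : C(Sig S × ℝ, ℝ),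
    Tendsto (fun n : ℕ => (∑ i ∈ Finset.range n, g ((Fmap S)^[i] q)) / n) atTop
      (𝓝 (∫ q', g q' ∂m))}


/-! ### Auxiliary material for the proof of Statement 13 -/

section Statement13Aux

private lemma real_le_of_forall_pos_le_add' {a b : ℝ} (h : ∀ ε : ℝ, 0 < ε → a ≤ b + ε) :
    a ≤ b := by
  by_contra hab
  push_neg at hab
  have := h ((a - b) / 2) (by linarith)
  linarith

private lemma ennreal_sum_eq_of_le {ι : Type*} (s : Finset ι) (a b : ι → ℝ≥0∞)
    (hle : ∀ t ∈ s, a t ≤ b t) (hsum : ∑ t ∈ s, b t ≤ ∑ t ∈ s, a t)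
    (hfin : ∑ t ∈ s, a t ≠ ⊤) : ∀ t ∈ s, a t = b t := by
  classical
  intro t ht
  refine le_antisymm (hle t ht) ?_
  have herase : ∑ x ∈ s.erase t, a x ≠ ⊤ :=
    ne_top_of_le_ne_top hfin (Finset.sum_le_sum_of_subset (Finset.erase_subset _ _))
  have h1 : b t + ∑ x ∈ s.erase t, a x ≤ a t + ∑ x ∈ s.erase t, a x := by
    calc b t + ∑ x ∈ s.erase t, a x
        ≤ b t + ∑ x ∈ s.erase t, b x := by
          refine add_le_add_right (Finset.sum_le_sum fun x hx => ?_) _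
          exact hle x (Finset.mem_of_mem_erase hx)
      _ = ∑ x ∈ s, b x := Finset.add_sum_erase s b ht
      _ ≤ ∑ x ∈ s, a x := hsum
      _ = a t + ∑ x ∈ s.erase t, a x := (Finset.add_sum_erase s a ht).symm
  exact (ENNReal.add_le_add_iff_right herase).mp h1

private lemma measure_inter_le_of_diff_null {m : Measure ℝ} {S₁ S₂ : Set ℝ}
    (h1 : m (S₁ \ S₂) = 0) (X : Set ℝ) : m (X ∩ S₁) ≤ m (X ∩ S₂) := by
  calc m (X ∩ S₁) ≤ m ((X ∩ S₂) ∪ (S₁ \ S₂)) := by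
        refine measure_mono ?_
        rintro x ⟨hx, h1x⟩
        by_cases h : x ∈ S₂
        · exact Or.inl ⟨hx, h⟩
        · exact Or.inr ⟨h1x, h⟩
    _ ≤ m (X ∩ S₂) + m (S₁ \ S₂) := measure_union_le _ _
    _ = m (X ∩ S₂) := by rw [h1, add_zero]

private lemma measure_inter_congr_of_diff_null {m : Measure ℝ} {S₁ S₂ : Set ℝ}
    (h1 : m (S₁ \ S₂) = 0) (h2 : m (S₂ \ S₁) = 0) (X : Set ℝ) :
    m (X ∩ S₁) = m (X ∩ S₂) :=
  le_antisymm (measure_inter_le_of_diff_null h1 X) (measure_inter_le_of_diff_null h2 X)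

/-! Basic facts about `msupport`. -/

private lemma not_mem_msupport {m : Measure ℝ} {x : ℝ} :
    x ∉ msupport m ↔ ∃ ε > (0:ℝ), m (Ioo (x - ε) (x + ε)) = 0 := by
  constructor
  · intro h
    rw [msupport, mem_setOf_eq] at h
    push_neg at h
    obtain ⟨ε, hε, h⟩ := h
    exact ⟨ε, hε, le_antisymm h (zero_le)⟩
  · rintro ⟨ε, hε, h⟩ hx
    have := hx ε hε
    rw [h] at this
    exact lt_irrefl 0 this

private lemma msupport_isClosed (m : Measure ℝ) : IsClosed (msupport m) := by
  rw [← isOpen_compl_iff, isOpen_iff_forall_mem_open]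
  intro x hx
  obtain ⟨ε, hε, h0⟩ := not_mem_msupport.mp hx
  refine ⟨Ioo (x - ε / 2) (x + ε / 2), fun y hy => ?_, isOpen_Ioo,
    by constructor <;> simp <;> linarith⟩
  refine not_mem_msupport.mpr ⟨ε / 2, by linarith, ?_⟩
  have hsub : Ioo (y - ε / 2) (y + ε / 2) ⊆ Ioo (x - ε) (x + ε) := by
    intro z hz
    have h1 := hy.1
    have h2 := hy.2
    exact ⟨by linarith [hz.1], by linarith [hz.2]⟩
  exact le_antisymm (h0 ▸ measure_mono hsub) (zero_le)

private lemma msupport_subset_Icc {m : Measure ℝ} (h : m (Icc (0:ℝ) 1)ᶜ = 0) :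
    msupport m ⊆ Icc 0 1 := by
  intro x hx
  by_contra hxI
  simp only [mem_Icc, not_and_or, not_le] at hxI
  rcases hxI with h1 | h2
  · have hpos := hx (-x) (by linarith)
    have hsub : Ioo (x - -x) (x + -x) ⊆ (Icc (0:ℝ) 1)ᶜ := by
      intro z hz
      intro hzI
      have := hz.2
      have := hzI.1
      linarith
    have := lt_of_lt_of_le hpos (measure_mono hsub)
    rw [h] at this
    exact lt_irrefl 0 this
  · have hpos := hx (x - 1) (by linarith)
    have hsub : Ioo (x - (x - 1)) (x + (x - 1)) ⊆ (Icc (0:ℝ) 1)ᶜ := by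
      intro z hz
      intro hzI
      have := hz.1
      have := hzI.2
      linarith
    have := lt_of_lt_of_le hpos (measure_mono hsub)
    rw [h] at this
    exact lt_irrefl 0 this

private lemma msupport_nonempty {m : Measure ℝ} (hm : m ≠ 0) (h : m (Icc (0:ℝ) 1)ᶜ = 0) :
    (msupport m).Nonempty := by
  by_contra hne
  rw [Set.not_nonempty_iff_eq_empty] at hne
  have key : ∀ x : ℝ, ∃ ε > (0:ℝ), m (Ioo (x - ε) (x + ε)) = 0 := by
    intro x
    refine not_mem_msupport.mp ?_
    rw [hne]
    exact notMem_empty x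
  choose e he h0 using key
  have hcover : Icc (0:ℝ) 1 ⊆ ⋃ x : ℝ, Ioo (x - e x) (x + e x) := by
    intro x _
    exact mem_iUnion.2 ⟨x, by constructor <;> simp <;> linarith [he x]⟩
  obtain ⟨t, ht⟩ := isCompact_Icc.elim_finite_subcover
    (fun x : ℝ => Ioo (x - e x) (x + e x)) (fun x => isOpen_Ioo) hcover
  have hIcc : m (Icc (0:ℝ) 1) = 0 := by
    refine le_antisymm ?_ (zero_le)
    calc m (Icc (0:ℝ) 1) ≤ m (⋃ x ∈ t, Ioo (x - e x) (x + e x)) := measure_mono ht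
      _ ≤ ∑ x ∈ t, m (Ioo (x - e x) (x + e x)) := measure_biUnion_finset_le t _
      _ = 0 := by
          refine Finset.sum_eq_zero fun x _ => h0 x
  have huniv : m univ = 0 := by
    refine le_antisymm ?_ (zero_le)
    calc m univ = m (Icc (0:ℝ) 1 ∪ (Icc (0:ℝ) 1)ᶜ) := by rw [union_compl_self]
      _ ≤ m (Icc (0:ℝ) 1) + m (Icc (0:ℝ) 1)ᶜ := measure_union_le _ _
      _ = 0 := by rw [hIcc, h, add_zero]
  exact hm (MeasureTheory.Measure.measure_univ_eq_zero.mp huniv)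

/-! Admissible compositions, as an inductive family of maps. -/

/-- `ReachF S k j g` : `g` is the composition `f_{w_m} ∘ ⋯ ∘ f_{w_1}` along an admissible
word `w_1 = k, …, w_m` whose last letter `w_m` is admissible to `j`. -/
private inductive ReachF (S : Sys N) (k : Fin N) : Fin N → (ℝ → ℝ) → Prop
  | base {j : Fin N} (h : Adm S k j) : ReachF S k j (S.f k)
  | step {i j : Fin N} {g : ℝ → ℝ} (h : ReachF S k i g) (hij : Adm S i j) :
      ReachF S k j (fun x => S.f i (g x))

private lemma reachF_exists (S : Sys N) (i j : Fin N) : ∃ g, ReachF S i j g := by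
  classical
  obtain ⟨n, hn, hpos⟩ := S.transitive
  set M : Matrix (Fin N) (Fin N) ℕ := Matrix.of fun i j => if S.A i j then (1:ℕ) else 0 with hM
  have key : ∀ m : ℕ, ∀ i j : Fin N, 0 < (M ^ (m + 1)) i j → ∃ g, ReachF S i j g := by
    intro m
    induction m with
    | zero =>
      intro i j h
      rw [pow_one] at h
      have hA : S.A i j = true := by
        by_contra hA
        rw [hM] at h
        simp [Matrix.of_apply, hA] at h
      exact ⟨S.f i, ReachF.base hA⟩
    | succ m ih =>
      intro i j h
      rw [pow_succ, Matrix.mul_apply] at h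
      have hex : ∃ l, 0 < (M ^ (m + 1)) i l * M l j := by
        by_contra hc
        push_neg at hc
        have hz : ∑ l, (M ^ (m + 1)) i l * M l j = 0 :=
          Finset.sum_eq_zero fun l _ => Nat.le_zero.mp (hc l)
        omega
      obtain ⟨l, hl⟩ := hex
      have h1 : 0 < (M ^ (m + 1)) i l := Nat.pos_of_ne_zero fun h0 => by simp [h0] at hl
      have h2 : 0 < M l j := Nat.pos_of_ne_zero fun h0 => by simp [h0] at hl
      have hA : S.A l j = true := by
        by_contra hA
        rw [hM] at h2
        simp [Matrix.of_apply, hA] at h2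
      obtain ⟨g, hg⟩ := ih i l h1
      exact ⟨fun x => S.f l (g x), ReachF.step hg hA⟩
  obtain ⟨m, rfl⟩ : ∃ m, n = m + 1 := ⟨n - 1, by omega⟩
  exact key m i j (hpos i j)

private lemma reachF_list {S : Sys N} {k j : Fin N} {g : ℝ → ℝ} (h : ReachF S k j g) :
    ∃ l : List (Fin N), l ≠ [] ∧ l.Chain' (Adm S) ∧ l.head? = some k ∧
      (∃ a, l.getLast? = some a ∧ Adm S a j) ∧ ∀ x, wordMap S l x = g x := by
  induction h with
  | @base j hadm =>
    exact ⟨[k], by simp, List.isChain_singleton k, rfl, ⟨k, rfl, hadm⟩, fun x => rfl⟩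
  | @step i j g hr hadm ih =>
    obtain ⟨l, hne, hch, hhd, ⟨a, hlast, ha⟩, hw⟩ := ih
    refine ⟨l ++ [i], by simp, ?_, ?_, ⟨i, List.getLast?_concat, hadm⟩, ?_⟩
    · show List.IsChain (Adm S) (l ++ [i])
      rw [List.isChain_append]
      refine ⟨hch, List.isChain_singleton i, ?_⟩
      intro x hx y hy
      rw [hlast] at hx
      have hx' : a = x := by simpa using hx
      have hy' : i = y := by simpa using hy
      rw [← hx', ← hy']
      exact ha
    · rw [List.head?_append_of_ne_nil _ hne, hhd]
    · intro x
      show (l ++ [i]).foldl (fun y k' => S.f k' y) x = S.f i (g x)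
      rw [List.foldl_append]
      show S.f i (wordMap S l x) = S.f i (g x)
      rw [hw x]

/-- Build the transition word required in Statement 13 out of a `ReachF` composition. -/
private lemma reachF_build_list {S : Sys N} {k k' : Fin N} {g : ℝ → ℝ}
    (hg : ReachF S k k' g) :
    ∃ lA : List (Fin N), 2 ≤ lA.length ∧ lA.Chain' (Adm S) ∧ lA.head? = some k ∧
      lA.getLast? = some k' ∧ ∀ x, transMap S lA x = g x := by
  obtain ⟨l, hne, hch, hhd, ⟨a, hlast, ha⟩, hw⟩ := reachF_list hg
  refine ⟨l ++ [k'], ?_, ?_, ?_, List.getLast?_concat, ?_⟩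
  · have hlen : 0 < l.length := List.length_pos_iff.mpr hne
    rw [List.length_append]
    simp only [List.length_singleton]
    omega
  · show List.IsChain (Adm S) (l ++ [k'])
    rw [List.isChain_append]
    refine ⟨hch, List.isChain_singleton k', ?_⟩
    intro x hx y hy
    rw [hlast] at hx
    have hx' : a = x := by simpa using hx
    have hy' : k' = y := by simpa using hy
    rw [← hx', ← hy']
    exact ha
  · rw [List.head?_append_of_ne_nil _ hne, hhd]
  · intro x
    show wordMap S (l ++ [k']).dropLast x = g x
    rw [List.dropLast_concat]
    exact hw x

/-! Support facts for stationary measures. -/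

private lemma stat_apply {S : Sys N} {μ : Fin N → Measure ℝ} (hμ : IsStationary S μ)
    (j : Fin N) {E : Set ℝ} (hE : MeasurableSet E) :
    μ j E = ∑ i, ENNReal.ofReal (S.P i j) * μ i (S.f i ⁻¹' E) := by
  rw [hμ.2.2.2 j, MeasureTheory.Measure.finset_sum_apply]
  refine Finset.sum_congr rfl fun i _ => ?_
  rw [MeasureTheory.Measure.smul_apply, MeasureTheory.Measure.map_apply (S.f_meas i) hE,
    smul_eq_mul]

private lemma supp_subset {S : Sys N} {μ : Fin N → Measure ℝ} (hμ : IsStationary S μ)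
    (j : Fin N) : msupport (μ j) ⊆ Icc 0 1 :=
  msupport_subset_Icc (hμ.2.2.1 j)

private lemma supp_invariant {S : Sys N} {μ : Fin N → Measure ℝ} (hμ : IsStationary S μ)
    {i j : Fin N} (hij : Adm S i j) {x : ℝ} (hx : x ∈ msupport (μ i)) :
    S.f i x ∈ msupport (μ j) := by
  have hxI : x ∈ Icc (0:ℝ) 1 := supp_subset hμ i hx
  intro ε hε
  have hcont : ContinuousWithinAt (S.f i) (Icc 0 1) x :=
    ((S.f_contDiff i).continuousOn).continuousWithinAt hxI
  obtain ⟨δ, hδ, hd⟩ := Metric.continuousWithinAt_iff.mp hcont ε hε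
  have hsub : Ioo (x - δ) (x + δ) ∩ Icc 0 1 ⊆ S.f i ⁻¹' Ioo (S.f i x - ε) (S.f i x + ε) := by
    rintro y ⟨hy1, hy2⟩
    have hdist : dist y x < δ := by
      rw [Real.dist_eq, abs_lt]
      exact ⟨by linarith [hy1.1], by linarith [hy1.2]⟩
    have := hd hy2 hdist
    rw [Real.dist_eq, abs_lt] at this
    exact ⟨by linarith [this.1], by linarith [this.2]⟩
  have hpos : 0 < μ i (Ioo (x - δ) (x + δ) ∩ Icc 0 1) := by
    have h1 : μ i (Ioo (x - δ) (x + δ)) ≤ μ i (Ioo (x - δ) (x + δ) ∩ Icc 0 1)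
        + μ i (Icc (0:ℝ) 1)ᶜ := by
      refine le_trans (measure_mono ?_) (measure_union_le _ _)
      intro z hz
      by_cases hzI : z ∈ Icc (0:ℝ) 1
      · exact Or.inl ⟨hz, hzI⟩
      · exact Or.inr hzI
    rw [hμ.2.2.1 i, add_zero] at h1
    exact lt_of_lt_of_le (hx δ hδ) h1
  rw [stat_apply hμ j (measurableSet_Ioo :
    MeasurableSet (Ioo (S.f i x - ε) (S.f i x + ε)))]
  have hterm : 0 < ENNReal.ofReal (S.P i j)
      * μ i (S.f i ⁻¹' Ioo (S.f i x - ε) (S.f i x + ε)) := by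
    refine ENNReal.mul_pos ?_ ?_
    · exact (ENNReal.ofReal_pos.mpr ((S.P_pos_iff i j).mpr hij)).ne'
    · exact (lt_of_lt_of_le hpos (measure_mono hsub)).ne'
  refine lt_of_lt_of_le hterm (Finset.single_le_sum
    (f := fun l => ENNReal.ofReal (S.P l j) * μ l (S.f l ⁻¹' Ioo (S.f i x - ε) (S.f i x + ε)))
    (fun l _ => zero_le) (Finset.mem_univ i))

private lemma reachF_supp {S : Sys N} {μ : Fin N → Measure ℝ} (hμ : IsStationary S μ)
    {k j : Fin N} {g : ℝ → ℝ} (h : ReachF S k j g) {x : ℝ} (hx : x ∈ msupport (μ k)) :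
    g x ∈ msupport (μ j) := by
  induction h with
  | base hadm => exact supp_invariant hμ hadm hx
  | step hr hadm ih => exact supp_invariant hμ hadm ih

private lemma supp_ne {S : Sys N} {μ : Fin N → Measure ℝ} (hμ : IsStationary S μ)
    (j : Fin N) : (msupport (μ j)).Nonempty := by
  have hex : ∃ k0 : Fin N, μ k0 ≠ 0 := by
    by_contra hc
    push_neg at hc
    have h1 := hμ.2.1
    rw [Finset.sum_eq_zero (fun i _ => by simp [hc i])] at h1
    exact zero_ne_one h1
  obtain ⟨k0, hk0⟩ := hex
  obtain ⟨x, hx⟩ := msupport_nonempty hk0 (hμ.2.2.1 k0)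
  obtain ⟨g, hg⟩ := reachF_exists S k0 j
  exact ⟨g x, reachF_supp hμ hg hx⟩

private lemma supp_compact {S : Sys N} {μ : Fin N → Measure ℝ} (hμ : IsStationary S μ)
    (j : Fin N) : IsCompact (msupport (μ j)) :=
  isCompact_Icc.of_isClosed_subset (msupport_isClosed (μ j)) (supp_subset hμ j)

private lemma Alow_mem_supp {S : Sys N} {μ : Fin N → Measure ℝ} (hμ : IsStationary S μ)
    (j : Fin N) : Alow (μ j) ∈ msupport (μ j) :=
  (supp_compact hμ j).sInf_mem (supp_ne hμ j)

private lemma Bhigh_mem_supp {S : Sys N} {μ : Fin N → Measure ℝ} (hμ : IsStationary S μ)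
    (j : Fin N) : Bhigh (μ j) ∈ msupport (μ j) :=
  (supp_compact hμ j).sSup_mem (supp_ne hμ j)

private lemma Alow_le_of_mem {S : Sys N} {μ : Fin N → Measure ℝ} (hμ : IsStationary S μ)
    {j : Fin N} {x : ℝ} (hx : x ∈ msupport (μ j)) : Alow (μ j) ≤ x :=
  csInf_le (bddBelow_Icc.mono (supp_subset hμ j)) hx

private lemma le_Bhigh_of_mem {S : Sys N} {μ : Fin N → Measure ℝ} (hμ : IsStationary S μ)
    {j : Fin N} {x : ℝ} (hx : x ∈ msupport (μ j)) : x ≤ Bhigh (μ j) :=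
  le_csSup (bddAbove_Icc.mono (supp_subset hμ j)) hx

private lemma AB_subset {S : Sys N} {μ : Fin N → Measure ℝ} (hμ : IsStationary S μ)
    (j : Fin N) : Icc (Alow (μ j)) (Bhigh (μ j)) ⊆ Icc (0:ℝ) 1 := by
  intro x hx
  have hA := supp_subset hμ j (Alow_mem_supp hμ j)
  have hB := supp_subset hμ j (Bhigh_mem_supp hμ j)
  exact ⟨le_trans hA.1 hx.1, le_trans hx.2 hB.2⟩

private lemma Alow_le_Bhigh {S : Sys N} {μ : Fin N → Measure ℝ} (hμ : IsStationary S μ)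
    (j : Fin N) : Alow (μ j) ≤ Bhigh (μ j) :=
  Alow_le_of_mem hμ (Bhigh_mem_supp hμ j)

private lemma f_maps_interval {S : Sys N} {μ : Fin N → Measure ℝ} (hμ : IsStationary S μ)
    {i j : Fin N} (hij : Adm S i j) {x : ℝ}
    (hx : x ∈ Icc (Alow (μ i)) (Bhigh (μ i))) :
    S.f i x ∈ Icc (Alow (μ j)) (Bhigh (μ j)) := by
  have hmono := (S.f_mono i).monotoneOn
  have hAi := Alow_mem_supp hμ i
  have hBi := Bhigh_mem_supp hμ i
  have hAI := supp_subset hμ i hAi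
  have hBI := supp_subset hμ i hBi
  have hxI : x ∈ Icc (0:ℝ) 1 := AB_subset hμ i hx
  constructor
  · exact le_trans (Alow_le_of_mem hμ (supp_invariant hμ hij hAi)) (hmono hAI hxI hx.1)
  · exact le_trans (hmono hxI hBI hx.2) (le_Bhigh_of_mem hμ (supp_invariant hμ hij hBi))

private lemma reachF_interval {S : Sys N} {μ : Fin N → Measure ℝ} (hμ : IsStationary S μ)
    {k j : Fin N} {g : ℝ → ℝ} (h : ReachF S k j g) {x : ℝ}
    (hx : x ∈ Icc (Alow (μ k)) (Bhigh (μ k))) :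
    g x ∈ Icc (Alow (μ j)) (Bhigh (μ j)) := by
  induction h with
  | base hadm => exact f_maps_interval hμ hadm hx
  | step hr hadm ih => exact f_maps_interval hμ hadm ih

private lemma reachF_mono {S : Sys N} {μ : Fin N → Measure ℝ} (hμ : IsStationary S μ)
    {k j : Fin N} {g : ℝ → ℝ} (h : ReachF S k j g) {x y : ℝ}
    (hx : x ∈ Icc (Alow (μ k)) (Bhigh (μ k))) (hy : y ∈ Icc (Alow (μ k)) (Bhigh (μ k)))
    (hxy : x ≤ y) : g x ≤ g y := by
  induction h with
  | base hadm => exact (S.f_mono k).monotoneOn (AB_subset hμ k hx) (AB_subset hμ k hy) hxy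
  | @step i j g hr hadm ih =>
    exact (S.f_mono i).monotoneOn (AB_subset hμ i (reachF_interval hμ hr hx))
      (AB_subset hμ i (reachF_interval hμ hr hy)) ih

/-- The set of values of admissible compositions from `k` to `j` at the point `x0`. -/
private def WSet (S : Sys N) (k j : Fin N) (x0 : ℝ) : Set ℝ :=
  {y | ∃ g, ReachF S k j g ∧ g x0 = y}

private lemma WSet_nonempty (S : Sys N) (k j : Fin N) (x0 : ℝ) :
    (WSet S k j x0).Nonempty := by
  obtain ⟨g, hg⟩ := reachF_exists S k j
  exact ⟨g x0, g, hg, rfl⟩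

private lemma WSet_subset {S : Sys N} {μ : Fin N → Measure ℝ} (hμ : IsStationary S μ)
    (k j : Fin N) {x0 : ℝ} (h0 : x0 ∈ Icc (Alow (μ k)) (Bhigh (μ k))) :
    WSet S k j x0 ⊆ Icc (Alow (μ j)) (Bhigh (μ j)) := by
  rintro y ⟨g, hg, rfl⟩
  exact reachF_interval hμ hg h0

private lemma stationary_smul {S : Sys N} {ν : Fin N → Measure ℝ} (t : ℝ≥0∞)
    (hν : ∀ j, ν j = ∑ i, ENNReal.ofReal (S.P i j) • (ν i).map (S.f i)) (j : Fin N) :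
    t • ν j = ∑ i, ENNReal.ofReal (S.P i j) • (t • ν i).map (S.f i) := by
  rw [hν j, Finset.smul_sum]
  refine Finset.sum_congr rfl fun i _ => ?_
  rw [MeasureTheory.Measure.map_smul, smul_comm]

set_option maxHeartbeats 2000000 in
private lemma key_low {S : Sys N} {μ : Fin N → Measure ℝ} (hgen : IsGeneric S)
    (hμe : IsErgodicStationary S μ) (k k' : Fin N) :
    sInf (WSet S k k' (Bhigh (μ k))) ≤ Alow (μ k') := by
  obtain ⟨hμ, hext⟩ := hμe
  by_contra hcon
  push_neg at hcon
  obtain ⟨c, hceq⟩ : ∃ c : Fin N → ℝ, ∀ j, c j = sInf (WSet S k j (Bhigh (μ k))) :=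
    ⟨fun j => sInf (WSet S k j (Bhigh (μ k))), fun j => rfl⟩
  have hAc : Alow (μ k') < c k' := by rw [hceq k']; exact hcon
  clear hcon
  have hx0mem : Bhigh (μ k) ∈ Icc (Alow (μ k)) (Bhigh (μ k)) :=
    ⟨Alow_le_Bhigh hμ k, le_refl _⟩
  have hbdd : ∀ j, BddBelow (WSet S k j (Bhigh (μ k))) :=
    fun j => bddBelow_Icc.mono (WSet_subset hμ k j hx0mem)
  have hcA : ∀ j, Alow (μ j) ≤ c j := by
    intro j
    rw [hceq j]
    exact le_csInf (WSet_nonempty S k j _) fun y hy => (WSet_subset hμ k j hx0mem hy).1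
  have hcB : ∀ j, c j ≤ Bhigh (μ j) := by
    intro j
    obtain ⟨y, hy⟩ := WSet_nonempty S k j (Bhigh (μ k))
    rw [hceq j]
    exact le_trans (csInf_le (hbdd j) hy) (WSet_subset hμ k j hx0mem hy).2
  have hcI : ∀ j, c j ∈ Icc (0:ℝ) 1 := fun j => AB_subset hμ j ⟨hcA j, hcB j⟩
  -- step inequality : c j ≤ f i (c i) for admissible (i,j)
  have hstep : ∀ i j, Adm S i j → c j ≤ S.f i (c i) := by
    intro i j hij
    apply real_le_of_forall_pos_le_add'
    intro ε hε
    have hcont : ContinuousWithinAt (S.f i) (Icc 0 1) (c i) :=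
      ((S.f_contDiff i).continuousOn).continuousWithinAt (hcI i)
    obtain ⟨δ, hδ, hd⟩ := Metric.continuousWithinAt_iff.mp hcont ε hε
    obtain ⟨y, hymem, hylt⟩ : ∃ y ∈ WSet S k i (Bhigh (μ k)), y < c i + δ := by
      by_contra hcc
      push_neg at hcc
      have h1 := le_csInf (WSet_nonempty S k i _) hcc
      have h2 := hceq i
      linarith
    obtain ⟨g, hg, hgy⟩ := hymem
    have hymem' : y ∈ WSet S k i (Bhigh (μ k)) := ⟨g, hg, hgy⟩
    have hyI : y ∈ Icc (0:ℝ) 1 := AB_subset hμ i (WSet_subset hμ k i hx0mem hymem')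
    have hyge : c i ≤ y := by rw [hceq i]; exact csInf_le (hbdd i) hymem'
    have hdist : dist y (c i) < δ := by
      rw [Real.dist_eq, abs_lt]
      constructor <;> linarith
    have hfd := hd hyI hdist
    rw [Real.dist_eq, abs_lt] at hfd
    have hmem2 : S.f i y ∈ WSet S k j (Bhigh (μ k)) :=
      ⟨fun x => S.f i (g x), ReachF.step hg hij, by
        show S.f i (g _) = S.f i y
        rw [hgy]⟩
    have hle2 : c j ≤ S.f i y := by rw [hceq j]; exact csInf_le (hbdd j) hmem2
    linarith [hfd.2]
  -- measure-theoretic dichotomy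
  have hnull : ∀ i : Fin N, μ i (Icc (0:ℝ) 1)ᶜ = 0 := hμ.2.2.1
  have hfinU : ∀ i : Fin N, μ i univ ≠ ⊤ := by
    intro i
    have h1 : μ i univ ≤ ∑ l, μ l univ :=
      Finset.single_le_sum (f := fun l => μ l univ) (fun l _ => zero_le)
        (Finset.mem_univ i)
    rw [hμ.2.1] at h1
    exact ne_top_of_le_ne_top ENNReal.one_ne_top h1
  have hpre : ∀ i j, Adm S i j → S.f i ⁻¹' Iio (c j) ∩ Icc 0 1 ⊆ Iio (c i) := by
    intro i j hij x hx
    have hxlt : S.f i x < c j := hx.1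
    simp only [mem_Iio]
    by_contra hcx
    push_neg at hcx
    have h1 : S.f i (c i) ≤ S.f i x := (S.f_mono i).monotoneOn (hcI i) hx.2 hcx
    have h2 := hstep i j hij
    linarith
  have hmodnull : ∀ (i : Fin N) (s t : Set ℝ), s ∩ Icc 0 1 ⊆ t → μ i s ≤ μ i t := by
    intro i s t hst
    calc μ i s ≤ μ i ((s ∩ Icc 0 1) ∪ (Icc (0:ℝ) 1)ᶜ) := by
          refine measure_mono ?_
          intro x hx
          by_cases h : x ∈ Icc (0:ℝ) 1
          · exact Or.inl ⟨hx, h⟩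
          · exact Or.inr h
      _ ≤ μ i (s ∩ Icc 0 1) + μ i (Icc (0:ℝ) 1)ᶜ := measure_union_le _ _
      _ = μ i (s ∩ Icc 0 1) := by rw [hnull i, add_zero]
      _ ≤ μ i t := measure_mono hst
  have hrow : ∀ i : Fin N, ∑ j, ENNReal.ofReal (S.P i j) = 1 := by
    intro i
    rw [← ENNReal.ofReal_sum_of_nonneg (fun j _ => S.P_nonneg i j), S.P_row i,
      ENNReal.ofReal_one]
  have hP0 : ∀ i j, ¬ Adm S i j → ENNReal.ofReal (S.P i j) = 0 := by
    intro i j hij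
    refine ENNReal.ofReal_eq_zero.mpr ?_
    by_contra hp
    push_neg at hp
    exact hij ((S.P_pos_iff i j).mp hp)
  have hPpos : ∀ i j, Adm S i j → ENNReal.ofReal (S.P i j) ≠ 0 :=
    fun i j hij h => absurd (ENNReal.ofReal_eq_zero.mp h)
      (not_le.mpr ((S.P_pos_iff i j).mpr hij))
  have hsumA : ∑ p : Fin N × Fin N,
      ENNReal.ofReal (S.P p.1 p.2) * μ p.1 (S.f p.1 ⁻¹' Iio (c p.2))
      = ∑ j, μ j (Iio (c j)) := by
    rw [Fintype.sum_prod_type_right]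
    refine Finset.sum_congr rfl fun j _ => ?_
    have hr : ∀ x : Fin N, ENNReal.ofReal (S.P (x, j).1 (x, j).2)
        * μ (x, j).1 (S.f (x, j).1 ⁻¹' Iio (c (x, j).2))
        = ENNReal.ofReal (S.P x j) * μ x (S.f x ⁻¹' Iio (c j)) := fun x => rfl
    rw [Finset.sum_congr rfl fun x _ => hr x]
    exact (stat_apply hμ j measurableSet_Iio).symm
  have hsumB : ∑ p : Fin N × Fin N,
      ENNReal.ofReal (S.P p.1 p.2) * μ p.1 (Iio (c p.1))
      = ∑ i, μ i (Iio (c i)) := by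
    rw [Fintype.sum_prod_type]
    refine Finset.sum_congr rfl fun i _ => ?_
    have hr : ∀ y : Fin N, ENNReal.ofReal (S.P (i, y).1 (i, y).2)
        * μ (i, y).1 (Iio (c (i, y).1))
        = ENNReal.ofReal (S.P i y) * μ i (Iio (c i)) := fun y => rfl
    rw [Finset.sum_congr rfl fun y _ => hr y, ← Finset.sum_mul, hrow i, one_mul]
  have hfinsum : ∑ j, μ j (Iio (c j)) ≠ ⊤ := by
    have h1 : ∑ j, μ j (Iio (c j)) ≤ ∑ j, μ j univ :=
      Finset.sum_le_sum fun j _ => measure_mono (subset_univ _)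
    rw [hμ.2.1] at h1
    exact ne_top_of_le_ne_top ENNReal.one_ne_top h1
  have hforce := ennreal_sum_eq_of_le Finset.univ
    (fun p : Fin N × Fin N => ENNReal.ofReal (S.P p.1 p.2) * μ p.1 (S.f p.1 ⁻¹' Iio (c p.2)))
    (fun p : Fin N × Fin N => ENNReal.ofReal (S.P p.1 p.2) * μ p.1 (Iio (c p.1)))
    (by
      intro p _
      show ENNReal.ofReal (S.P p.1 p.2) * μ p.1 (S.f p.1 ⁻¹' Iio (c p.2))
        ≤ ENNReal.ofReal (S.P p.1 p.2) * μ p.1 (Iio (c p.1))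
      by_cases hadm : Adm S p.1 p.2
      · exact mul_le_mul_right (hmodnull p.1 _ _ (hpre p.1 p.2 hadm)) _
      · rw [hP0 p.1 p.2 hadm, zero_mul, zero_mul])
    (by rw [hsumA, hsumB])
    (by rw [hsumA]; exact hfinsum)
  have hkey : ∀ i j, Adm S i j → μ i (S.f i ⁻¹' Iio (c j)) = μ i (Iio (c i)) := by
    intro i j hij
    have h := hforce (i, j) (Finset.mem_univ _)
    simp only at h
    exact (ENNReal.mul_right_inj (hPpos i j hij) ENNReal.ofReal_ne_top).mp h
  have hd1 : ∀ i j, Adm S i j → μ i (S.f i ⁻¹' Iio (c j) \ Iio (c i)) = 0 := by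
    intro i j hij
    have hsub : S.f i ⁻¹' Iio (c j) \ Iio (c i) ⊆ (Icc (0:ℝ) 1)ᶜ := by
      intro x hx hIc
      exact hx.2 (hpre i j hij ⟨hx.1, hIc⟩)
    exact le_antisymm (le_trans (measure_mono hsub) (le_of_eq (hnull i))) (zero_le)
  have hd2 : ∀ i j, Adm S i j → μ i (Iio (c i) \ S.f i ⁻¹' Iio (c j)) = 0 := by
    intro i j hij
    have hmeas1 : MeasurableSet (S.f i ⁻¹' Iio (c j)) := (S.f_meas i) measurableSet_Iio
    have hid := measure_inter_add_diff (μ := μ i) (Iio (c i)) hmeas1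
    have hge : μ i (Iio (c i)) ≤ μ i (Iio (c i) ∩ S.f i ⁻¹' Iio (c j)) := by
      rw [← hkey i j hij]
      refine hmodnull i _ _ ?_
      intro x hx
      exact ⟨hpre i j hij hx, hx.1⟩
    have hfin2 : μ i (Iio (c i)) ≠ ⊤ :=
      ne_top_of_le_ne_top (hfinU i) (measure_mono (subset_univ _))
    have hle : μ i (Iio (c i)) + μ i (Iio (c i) \ S.f i ⁻¹' Iio (c j))
        ≤ μ i (Iio (c i)) + 0 := by
      calc μ i (Iio (c i)) + μ i (Iio (c i) \ S.f i ⁻¹' Iio (c j))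
          ≤ μ i (Iio (c i) ∩ S.f i ⁻¹' Iio (c j))
            + μ i (Iio (c i) \ S.f i ⁻¹' Iio (c j)) := add_le_add_left hge _
        _ = μ i (Iio (c i)) := hid
        _ = μ i (Iio (c i)) + 0 := (add_zero _).symm
    exact le_antisymm ((ENNReal.add_le_add_iff_left hfin2).mp hle) (zero_le)
  have hr_eq : ∀ j, (μ j).restrict (Iio (c j)) =
      ∑ i, ENNReal.ofReal (S.P i j) • ((μ i).restrict (Iio (c i))).map (S.f i) := by
    intro j
    ext E hE
    rw [MeasureTheory.Measure.restrict_apply hE, MeasureTheory.Measure.finset_sum_apply,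
      stat_apply hμ j (hE.inter measurableSet_Iio)]
    refine Finset.sum_congr rfl fun i _ => ?_
    rw [MeasureTheory.Measure.smul_apply, smul_eq_mul,
      MeasureTheory.Measure.map_apply (S.f_meas i) hE,
      MeasureTheory.Measure.restrict_apply ((S.f_meas i) hE)]
    by_cases hij : Adm S i j
    · congr 1
      rw [preimage_inter]
      exact measure_inter_congr_of_diff_null (hd1 i j hij) (hd2 i j hij) _
    · rw [hP0 i j hij, zero_mul, zero_mul]
  have hcompl_diff : ∀ U V : Set ℝ, Uᶜ \ Vᶜ = V \ U := by
    intro U V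
    ext x
    simp only [mem_diff, mem_compl_iff, not_not]
    tauto
  have hm_eq : ∀ j, (μ j).restrict (Ici (c j)) =
      ∑ i, ENNReal.ofReal (S.P i j) • ((μ i).restrict (Ici (c i))).map (S.f i) := by
    intro j
    ext E hE
    rw [MeasureTheory.Measure.restrict_apply hE, MeasureTheory.Measure.finset_sum_apply,
      stat_apply hμ j (hE.inter measurableSet_Ici)]
    refine Finset.sum_congr rfl fun i _ => ?_
    rw [MeasureTheory.Measure.smul_apply, smul_eq_mul,
      MeasureTheory.Measure.map_apply (S.f_meas i) hE,
      MeasureTheory.Measure.restrict_apply ((S.f_meas i) hE)]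
    by_cases hij : Adm S i j
    · congr 1
      rw [preimage_inter]
      have h1 : S.f i ⁻¹' Ici (c j) = (S.f i ⁻¹' Iio (c j))ᶜ := by
        rw [← compl_Iio, preimage_compl]
      have h2 : Ici (c i) = (Iio (c i))ᶜ := (compl_Iio (a := c i)).symm
      rw [h1, h2]
      exact measure_inter_congr_of_diff_null
        (by rw [hcompl_diff]; exact hd2 i j hij)
        (by rw [hcompl_diff]; exact hd1 i j hij) _
    · rw [hP0 i j hij, zero_mul, zero_mul]
  set R : ℝ≥0∞ := ∑ j, μ j (Iio (c j)) with hR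
  set Mm : ℝ≥0∞ := ∑ j, μ j (Ici (c j)) with hMm
  have hRM : R + Mm = 1 := by
    rw [hR, hMm, ← Finset.sum_add_distrib, ← hμ.2.1]
    refine Finset.sum_congr rfl fun j _ => ?_
    rw [← measure_union (Iio_disjoint_Ici le_rfl) measurableSet_Ici, Iio_union_Ici]
  have hRtop : R ≠ ⊤ := by
    intro h
    rw [h] at hRM
    simp at hRM
  have hMtop : Mm ≠ ⊤ := by
    intro h
    rw [h, add_comm] at hRM
    simp at hRM
  have hR0 : R ≠ 0 := by
    intro h0
    rw [hR] at h0
    have hall : μ k' (Iio (c k')) = 0 := by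
      have := Finset.sum_eq_zero_iff.mp h0 k' (Finset.mem_univ _)
      exact this
    have hApos := Alow_mem_supp hμ k' (c k' - Alow (μ k')) (by linarith)
    have hsub : Ioo (Alow (μ k') - (c k' - Alow (μ k')))
        (Alow (μ k') + (c k' - Alow (μ k'))) ⊆ Iio (c k') := by
      intro z hz
      have h2 := hz.2
      simp only [mem_Iio]
      linarith
    have := lt_of_lt_of_le hApos (le_trans (measure_mono hsub) (le_of_eq hall))
    exact lt_irrefl 0 this
  have hM0 : Mm ≠ 0 := by
    intro h0
    rw [hMm] at h0
    have hall : ∀ j, μ j (Ici (c j)) = 0 :=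
      fun j => Finset.sum_eq_zero_iff.mp h0 j (Finset.mem_univ _)
    have hceqB : ∀ j, c j = Bhigh (μ j) := by
      intro j
      refine le_antisymm (hcB j) ?_
      by_contra hb
      push_neg at hb
      have hBpos := Bhigh_mem_supp hμ j (Bhigh (μ j) - c j) (by linarith)
      have hsub : Ioo (Bhigh (μ j) - (Bhigh (μ j) - c j))
          (Bhigh (μ j) + (Bhigh (μ j) - c j)) ⊆ Ici (c j) := by
        intro z hz
        have h1 := hz.1
        simp only [mem_Ici]
        linarith
      have := lt_of_lt_of_le hBpos (le_trans (measure_mono hsub) (le_of_eq (hall j)))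
      exact lt_irrefl 0 this
    apply hgen.2.2
    refine ⟨fun j => Bhigh (μ j), fun j => supp_subset hμ j (Bhigh_mem_supp hμ j), ?_⟩
    intro i j hij
    have h1 : S.f i (Bhigh (μ i)) ≤ Bhigh (μ j) :=
      le_Bhigh_of_mem hμ (supp_invariant hμ hij (Bhigh_mem_supp hμ i))
    have h2 := hstep i j hij
    rw [hceqB i, hceqB j] at h2
    exact le_antisymm h1 h2
  -- the two normalized stationary measures
  have hstat1 : IsStationary S (fun j => R⁻¹ • (μ j).restrict (Iio (c j))) := by
    refine ⟨fun j => ⟨?_⟩, ?_, fun j => ?_, fun j => ?_⟩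
    · show (R⁻¹ • (μ j).restrict (Iio (c j))) univ < ⊤
      rw [MeasureTheory.Measure.smul_apply, MeasureTheory.Measure.restrict_apply_univ,
        smul_eq_mul]
      exact ENNReal.mul_lt_top (ENNReal.inv_lt_top.mpr (pos_iff_ne_zero.mpr hR0))
        (lt_of_le_of_lt (measure_mono (subset_univ _)) (lt_top_iff_ne_top.mpr (hfinU j)))
    · show ∑ l, (R⁻¹ • (μ l).restrict (Iio (c l))) univ = 1
      have heach : ∀ l : Fin N, (R⁻¹ • (μ l).restrict (Iio (c l))) univ
          = R⁻¹ * μ l (Iio (c l)) := by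
        intro l
        rw [MeasureTheory.Measure.smul_apply, MeasureTheory.Measure.restrict_apply_univ,
          smul_eq_mul]
      rw [Finset.sum_congr rfl fun l _ => heach l, ← Finset.mul_sum, ← hR,
        ENNReal.inv_mul_cancel hR0 hRtop]
    · show (R⁻¹ • (μ j).restrict (Iio (c j))) (Icc (0:ℝ) 1)ᶜ = 0
      rw [MeasureTheory.Measure.smul_apply,
        MeasureTheory.Measure.restrict_apply measurableSet_Icc.compl, smul_eq_mul]
      have h0 : μ j ((Icc (0:ℝ) 1)ᶜ ∩ Iio (c j)) = 0 :=
        le_antisymm (le_trans (measure_mono inter_subset_left) (le_of_eq (hnull j)))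
          (zero_le)
      rw [h0, mul_zero]
    · show R⁻¹ • (μ j).restrict (Iio (c j)) = ∑ i, ENNReal.ofReal (S.P i j) •
        (R⁻¹ • (μ i).restrict (Iio (c i))).map (S.f i)
      exact stationary_smul (ν := fun l => (μ l).restrict (Iio (c l))) R⁻¹ hr_eq j
  have hstat2 : IsStationary S (fun j => Mm⁻¹ • (μ j).restrict (Ici (c j))) := by
    refine ⟨fun j => ⟨?_⟩, ?_, fun j => ?_, fun j => ?_⟩
    · show (Mm⁻¹ • (μ j).restrict (Ici (c j))) univ < ⊤
      rw [MeasureTheory.Measure.smul_apply, MeasureTheory.Measure.restrict_apply_univ,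
        smul_eq_mul]
      exact ENNReal.mul_lt_top (ENNReal.inv_lt_top.mpr (pos_iff_ne_zero.mpr hM0))
        (lt_of_le_of_lt (measure_mono (subset_univ _)) (lt_top_iff_ne_top.mpr (hfinU j)))
    · show ∑ l, (Mm⁻¹ • (μ l).restrict (Ici (c l))) univ = 1
      have heach : ∀ l : Fin N, (Mm⁻¹ • (μ l).restrict (Ici (c l))) univ
          = Mm⁻¹ * μ l (Ici (c l)) := by
        intro l
        rw [MeasureTheory.Measure.smul_apply, MeasureTheory.Measure.restrict_apply_univ,
          smul_eq_mul]
      rw [Finset.sum_congr rfl fun l _ => heach l, ← Finset.mul_sum, ← hMm,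
        ENNReal.inv_mul_cancel hM0 hMtop]
    · show (Mm⁻¹ • (μ j).restrict (Ici (c j))) (Icc (0:ℝ) 1)ᶜ = 0
      rw [MeasureTheory.Measure.smul_apply,
        MeasureTheory.Measure.restrict_apply measurableSet_Icc.compl, smul_eq_mul]
      have h0 : μ j ((Icc (0:ℝ) 1)ᶜ ∩ Ici (c j)) = 0 :=
        le_antisymm (le_trans (measure_mono inter_subset_left) (le_of_eq (hnull j)))
          (zero_le)
      rw [h0, mul_zero]
    · show Mm⁻¹ • (μ j).restrict (Ici (c j)) = ∑ i, ENNReal.ofReal (S.P i j) •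
        (Mm⁻¹ • (μ i).restrict (Ici (c i))).map (S.f i)
      exact stationary_smul (ν := fun l => (μ l).restrict (Ici (c l))) Mm⁻¹ hm_eq j
  have h1M : (1:ℝ≥0∞) - R = Mm := ENNReal.sub_eq_of_eq_add_rev hRtop hRM.symm
  have hdec : ∀ j : Fin N, μ j = R • (fun l => R⁻¹ • (μ l).restrict (Iio (c l))) j
      + ((1:ℝ≥0∞) - R) • (fun l => Mm⁻¹ • (μ l).restrict (Ici (c l))) j := by
    intro j
    show μ j = R • (R⁻¹ • (μ j).restrict (Iio (c j)))
      + ((1:ℝ≥0∞) - R) • (Mm⁻¹ • (μ j).restrict (Ici (c j)))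
    rw [h1M, smul_smul, smul_smul, ENNReal.mul_inv_cancel hR0 hRtop,
      ENNReal.mul_inv_cancel hM0 hMtop, one_smul, one_smul, ← compl_Iio]
    exact (MeasureTheory.Measure.restrict_add_restrict_compl measurableSet_Iio).symm
  have hRpos : (0:ℝ≥0∞) < R := pos_iff_ne_zero.mpr hR0
  have hRlt1 : R < 1 := by
    rw [← hRM]
    exact ENNReal.lt_add_right hRtop hM0
  have heq := hext _ _ hstat1 hstat2 R hRpos hRlt1 hdec
  obtain ⟨j0, hj0⟩ : ∃ j0, μ j0 (Iio (c j0)) ≠ 0 := by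
    by_contra hc
    push_neg at hc
    exact hR0 (by rw [hR]; exact Finset.sum_eq_zero fun j _ => hc j)
  have h1 := congrFun heq j0
  have hL : (R⁻¹ • (μ j0).restrict (Iio (c j0))) (Iio (c j0)) ≠ 0 := by
    rw [MeasureTheory.Measure.smul_apply,
      MeasureTheory.Measure.restrict_apply measurableSet_Iio, inter_self, smul_eq_mul]
    exact mul_ne_zero (ENNReal.inv_ne_zero.mpr hRtop) hj0
  have hRr : (Mm⁻¹ • (μ j0).restrict (Ici (c j0))) (Iio (c j0)) = 0 := by
    rw [MeasureTheory.Measure.smul_apply,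
      MeasureTheory.Measure.restrict_apply measurableSet_Iio, smul_eq_mul]
    have hemp : Iio (c j0) ∩ Ici (c j0) = ∅ := by
      refine eq_empty_iff_forall_notMem.mpr fun x hx => ?_
      have h1 : x < c j0 := hx.1
      have h2 : c j0 ≤ x := hx.2
      linarith
    rw [hemp, measure_empty, mul_zero]
  rw [h1] at hL
  exact hL hRr

set_option maxHeartbeats 2000000 in
private lemma key_high {S : Sys N} {μ : Fin N → Measure ℝ} (hgen : IsGeneric S)
    (hμe : IsErgodicStationary S μ) (k k' : Fin N) :
    Bhigh (μ k') ≤ sSup (WSet S k k' (Alow (μ k))) := by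
  obtain ⟨hμ, hext⟩ := hμe
  by_contra hcon
  push_neg at hcon
  obtain ⟨d, hdeq⟩ : ∃ d : Fin N → ℝ, ∀ j, d j = sSup (WSet S k j (Alow (μ k))) :=
    ⟨fun j => sSup (WSet S k j (Alow (μ k))), fun j => rfl⟩
  have hBd : d k' < Bhigh (μ k') := by rw [hdeq k']; exact hcon
  clear hcon
  have hx0mem : Alow (μ k) ∈ Icc (Alow (μ k)) (Bhigh (μ k)) :=
    ⟨le_refl _, Alow_le_Bhigh hμ k⟩
  have hbdd : ∀ j, BddAbove (WSet S k j (Alow (μ k))) :=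
    fun j => bddAbove_Icc.mono (WSet_subset hμ k j hx0mem)
  have hdB : ∀ j, d j ≤ Bhigh (μ j) := by
    intro j
    rw [hdeq j]
    exact csSup_le (WSet_nonempty S k j _) fun y hy => (WSet_subset hμ k j hx0mem hy).2
  have hdA : ∀ j, Alow (μ j) ≤ d j := by
    intro j
    obtain ⟨y, hy⟩ := WSet_nonempty S k j (Alow (μ k))
    rw [hdeq j]
    exact le_trans (WSet_subset hμ k j hx0mem hy).1 (le_csSup (hbdd j) hy)
  have hdI : ∀ j, d j ∈ Icc (0:ℝ) 1 := fun j => AB_subset hμ j ⟨hdA j, hdB j⟩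
  -- step inequality : f i (d i) ≤ d j for admissible (i,j)
  have hstep : ∀ i j, Adm S i j → S.f i (d i) ≤ d j := by
    intro i j hij
    apply real_le_of_forall_pos_le_add'
    intro ε hε
    have hcont : ContinuousWithinAt (S.f i) (Icc 0 1) (d i) :=
      ((S.f_contDiff i).continuousOn).continuousWithinAt (hdI i)
    obtain ⟨δ, hδ, hd'⟩ := Metric.continuousWithinAt_iff.mp hcont ε hε
    obtain ⟨y, hymem, hylt⟩ : ∃ y ∈ WSet S k i (Alow (μ k)), d i - δ < y := by
      refine exists_lt_of_lt_csSup (WSet_nonempty S k i _) ?_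
      rw [← hdeq i]
      linarith
    obtain ⟨g, hg, hgy⟩ := hymem
    have hymem' : y ∈ WSet S k i (Alow (μ k)) := ⟨g, hg, hgy⟩
    have hyI : y ∈ Icc (0:ℝ) 1 := AB_subset hμ i (WSet_subset hμ k i hx0mem hymem')
    have hyle : y ≤ d i := by rw [hdeq i]; exact le_csSup (hbdd i) hymem'
    have hdist : dist y (d i) < δ := by
      rw [Real.dist_eq, abs_lt]
      constructor <;> linarith
    have hfd := hd' hyI hdist
    rw [Real.dist_eq, abs_lt] at hfd
    have hmem2 : S.f i y ∈ WSet S k j (Alow (μ k)) :=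
      ⟨fun x => S.f i (g x), ReachF.step hg hij, by
        show S.f i (g _) = S.f i y
        rw [hgy]⟩
    have hle2 : S.f i y ≤ d j := by rw [hdeq j]; exact le_csSup (hbdd j) hmem2
    linarith [hfd.1]
  -- measure-theoretic dichotomy
  have hnull : ∀ i : Fin N, μ i (Icc (0:ℝ) 1)ᶜ = 0 := hμ.2.2.1
  have hfinU : ∀ i : Fin N, μ i univ ≠ ⊤ := by
    intro i
    have h1 : μ i univ ≤ ∑ l, μ l univ :=
      Finset.single_le_sum (f := fun l => μ l univ) (fun l _ => zero_le)
        (Finset.mem_univ i)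
    rw [hμ.2.1] at h1
    exact ne_top_of_le_ne_top ENNReal.one_ne_top h1
  have hpre : ∀ i j, Adm S i j → S.f i ⁻¹' Ioi (d j) ∩ Icc 0 1 ⊆ Ioi (d i) := by
    intro i j hij x hx
    have hxgt : d j < S.f i x := hx.1
    simp only [mem_Ioi]
    by_contra hcx
    push_neg at hcx
    have h1 : S.f i x ≤ S.f i (d i) := (S.f_mono i).monotoneOn hx.2 (hdI i) hcx
    have h2 := hstep i j hij
    linarith
  have hmodnull : ∀ (i : Fin N) (s t : Set ℝ), s ∩ Icc 0 1 ⊆ t → μ i s ≤ μ i t := by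
    intro i s t hst
    calc μ i s ≤ μ i ((s ∩ Icc 0 1) ∪ (Icc (0:ℝ) 1)ᶜ) := by
          refine measure_mono ?_
          intro x hx
          by_cases h : x ∈ Icc (0:ℝ) 1
          · exact Or.inl ⟨hx, h⟩
          · exact Or.inr h
      _ ≤ μ i (s ∩ Icc 0 1) + μ i (Icc (0:ℝ) 1)ᶜ := measure_union_le _ _
      _ = μ i (s ∩ Icc 0 1) := by rw [hnull i, add_zero]
      _ ≤ μ i t := measure_mono hst
  have hrow : ∀ i : Fin N, ∑ j, ENNReal.ofReal (S.P i j) = 1 := by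
    intro i
    rw [← ENNReal.ofReal_sum_of_nonneg (fun j _ => S.P_nonneg i j), S.P_row i,
      ENNReal.ofReal_one]
  have hP0 : ∀ i j, ¬ Adm S i j → ENNReal.ofReal (S.P i j) = 0 := by
    intro i j hij
    refine ENNReal.ofReal_eq_zero.mpr ?_
    by_contra hp
    push_neg at hp
    exact hij ((S.P_pos_iff i j).mp hp)
  have hPpos : ∀ i j, Adm S i j → ENNReal.ofReal (S.P i j) ≠ 0 :=
    fun i j hij h => absurd (ENNReal.ofReal_eq_zero.mp h)
      (not_le.mpr ((S.P_pos_iff i j).mpr hij))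
  have hsumA : ∑ p : Fin N × Fin N,
      ENNReal.ofReal (S.P p.1 p.2) * μ p.1 (S.f p.1 ⁻¹' Ioi (d p.2))
      = ∑ j, μ j (Ioi (d j)) := by
    rw [Fintype.sum_prod_type_right]
    refine Finset.sum_congr rfl fun j _ => ?_
    have hr : ∀ x : Fin N, ENNReal.ofReal (S.P (x, j).1 (x, j).2)
        * μ (x, j).1 (S.f (x, j).1 ⁻¹' Ioi (d (x, j).2))
        = ENNReal.ofReal (S.P x j) * μ x (S.f x ⁻¹' Ioi (d j)) := fun x => rfl
    rw [Finset.sum_congr rfl fun x _ => hr x]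
    exact (stat_apply hμ j measurableSet_Ioi).symm
  have hsumB : ∑ p : Fin N × Fin N,
      ENNReal.ofReal (S.P p.1 p.2) * μ p.1 (Ioi (d p.1))
      = ∑ i, μ i (Ioi (d i)) := by
    rw [Fintype.sum_prod_type]
    refine Finset.sum_congr rfl fun i _ => ?_
    have hr : ∀ y : Fin N, ENNReal.ofReal (S.P (i, y).1 (i, y).2)
        * μ (i, y).1 (Ioi (d (i, y).1))
        = ENNReal.ofReal (S.P i y) * μ i (Ioi (d i)) := fun y => rfl
    rw [Finset.sum_congr rfl fun y _ => hr y, ← Finset.sum_mul, hrow i, one_mul]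
  have hfinsum : ∑ j, μ j (Ioi (d j)) ≠ ⊤ := by
    have h1 : ∑ j, μ j (Ioi (d j)) ≤ ∑ j, μ j univ :=
      Finset.sum_le_sum fun j _ => measure_mono (subset_univ _)
    rw [hμ.2.1] at h1
    exact ne_top_of_le_ne_top ENNReal.one_ne_top h1
  have hforce := ennreal_sum_eq_of_le Finset.univ
    (fun p : Fin N × Fin N => ENNReal.ofReal (S.P p.1 p.2) * μ p.1 (S.f p.1 ⁻¹' Ioi (d p.2)))
    (fun p : Fin N × Fin N => ENNReal.ofReal (S.P p.1 p.2) * μ p.1 (Ioi (d p.1)))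
    (by
      intro p _
      show ENNReal.ofReal (S.P p.1 p.2) * μ p.1 (S.f p.1 ⁻¹' Ioi (d p.2))
        ≤ ENNReal.ofReal (S.P p.1 p.2) * μ p.1 (Ioi (d p.1))
      by_cases hadm : Adm S p.1 p.2
      · exact mul_le_mul_right (hmodnull p.1 _ _ (hpre p.1 p.2 hadm)) _
      · rw [hP0 p.1 p.2 hadm, zero_mul, zero_mul])
    (by rw [hsumA, hsumB])
    (by rw [hsumA]; exact hfinsum)
  have hkey : ∀ i j, Adm S i j → μ i (S.f i ⁻¹' Ioi (d j)) = μ i (Ioi (d i)) := by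
    intro i j hij
    have h := hforce (i, j) (Finset.mem_univ _)
    simp only at h
    exact (ENNReal.mul_right_inj (hPpos i j hij) ENNReal.ofReal_ne_top).mp h
  have hd1 : ∀ i j, Adm S i j → μ i (S.f i ⁻¹' Ioi (d j) \ Ioi (d i)) = 0 := by
    intro i j hij
    have hsub : S.f i ⁻¹' Ioi (d j) \ Ioi (d i) ⊆ (Icc (0:ℝ) 1)ᶜ := by
      intro x hx hIc
      exact hx.2 (hpre i j hij ⟨hx.1, hIc⟩)
    exact le_antisymm (le_trans (measure_mono hsub) (le_of_eq (hnull i))) (zero_le)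
  have hd2 : ∀ i j, Adm S i j → μ i (Ioi (d i) \ S.f i ⁻¹' Ioi (d j)) = 0 := by
    intro i j hij
    have hmeas1 : MeasurableSet (S.f i ⁻¹' Ioi (d j)) := (S.f_meas i) measurableSet_Ioi
    have hid := measure_inter_add_diff (μ := μ i) (Ioi (d i)) hmeas1
    have hge : μ i (Ioi (d i)) ≤ μ i (Ioi (d i) ∩ S.f i ⁻¹' Ioi (d j)) := by
      rw [← hkey i j hij]
      refine hmodnull i _ _ ?_
      intro x hx
      exact ⟨hpre i j hij hx, hx.1⟩
    have hfin2 : μ i (Ioi (d i)) ≠ ⊤ :=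
      ne_top_of_le_ne_top (hfinU i) (measure_mono (subset_univ _))
    have hle : μ i (Ioi (d i)) + μ i (Ioi (d i) \ S.f i ⁻¹' Ioi (d j))
        ≤ μ i (Ioi (d i)) + 0 := by
      calc μ i (Ioi (d i)) + μ i (Ioi (d i) \ S.f i ⁻¹' Ioi (d j))
          ≤ μ i (Ioi (d i) ∩ S.f i ⁻¹' Ioi (d j))
            + μ i (Ioi (d i) \ S.f i ⁻¹' Ioi (d j)) := add_le_add_left hge _
        _ = μ i (Ioi (d i)) := hid
        _ = μ i (Ioi (d i)) + 0 := (add_zero _).symm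
    exact le_antisymm ((ENNReal.add_le_add_iff_left hfin2).mp hle) (zero_le)
  have hr_eq : ∀ j, (μ j).restrict (Ioi (d j)) =
      ∑ i, ENNReal.ofReal (S.P i j) • ((μ i).restrict (Ioi (d i))).map (S.f i) := by
    intro j
    ext E hE
    rw [MeasureTheory.Measure.restrict_apply hE, MeasureTheory.Measure.finset_sum_apply,
      stat_apply hμ j (hE.inter measurableSet_Ioi)]
    refine Finset.sum_congr rfl fun i _ => ?_
    rw [MeasureTheory.Measure.smul_apply, smul_eq_mul,
      MeasureTheory.Measure.map_apply (S.f_meas i) hE,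
      MeasureTheory.Measure.restrict_apply ((S.f_meas i) hE)]
    by_cases hij : Adm S i j
    · congr 1
      rw [preimage_inter]
      exact measure_inter_congr_of_diff_null (hd1 i j hij) (hd2 i j hij) _
    · rw [hP0 i j hij, zero_mul, zero_mul]
  have hcompl_diff : ∀ U V : Set ℝ, Uᶜ \ Vᶜ = V \ U := by
    intro U V
    ext x
    simp only [mem_diff, mem_compl_iff, not_not]
    tauto
  have hm_eq : ∀ j, (μ j).restrict (Iic (d j)) =
      ∑ i, ENNReal.ofReal (S.P i j) • ((μ i).restrict (Iic (d i))).map (S.f i) := by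
    intro j
    ext E hE
    rw [MeasureTheory.Measure.restrict_apply hE, MeasureTheory.Measure.finset_sum_apply,
      stat_apply hμ j (hE.inter measurableSet_Iic)]
    refine Finset.sum_congr rfl fun i _ => ?_
    rw [MeasureTheory.Measure.smul_apply, smul_eq_mul,
      MeasureTheory.Measure.map_apply (S.f_meas i) hE,
      MeasureTheory.Measure.restrict_apply ((S.f_meas i) hE)]
    by_cases hij : Adm S i j
    · congr 1
      rw [preimage_inter]
      have h1 : S.f i ⁻¹' Iic (d j) = (S.f i ⁻¹' Ioi (d j))ᶜ := by
        rw [← compl_Ioi, preimage_compl]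
      have h2 : Iic (d i) = (Ioi (d i))ᶜ := (compl_Ioi (a := d i)).symm
      rw [h1, h2]
      exact measure_inter_congr_of_diff_null
        (by rw [hcompl_diff]; exact hd2 i j hij)
        (by rw [hcompl_diff]; exact hd1 i j hij) _
    · rw [hP0 i j hij, zero_mul, zero_mul]
  set R : ℝ≥0∞ := ∑ j, μ j (Ioi (d j)) with hR
  set Mm : ℝ≥0∞ := ∑ j, μ j (Iic (d j)) with hMm
  have hRM : R + Mm = 1 := by
    rw [hR, hMm, ← Finset.sum_add_distrib, ← hμ.2.1]
    refine Finset.sum_congr rfl fun j _ => ?_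
    rw [add_comm, ← measure_union (Iic_disjoint_Ioi le_rfl) measurableSet_Ioi,
      Iic_union_Ioi]
  have hRtop : R ≠ ⊤ := by
    intro h
    rw [h] at hRM
    simp at hRM
  have hMtop : Mm ≠ ⊤ := by
    intro h
    rw [h, add_comm] at hRM
    simp at hRM
  have hR0 : R ≠ 0 := by
    intro h0
    rw [hR] at h0
    have hall : μ k' (Ioi (d k')) = 0 := by
      have := Finset.sum_eq_zero_iff.mp h0 k' (Finset.mem_univ _)
      exact this
    have hBpos := Bhigh_mem_supp hμ k' (Bhigh (μ k') - d k') (by linarith)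
    have hsub : Ioo (Bhigh (μ k') - (Bhigh (μ k') - d k'))
        (Bhigh (μ k') + (Bhigh (μ k') - d k')) ⊆ Ioi (d k') := by
      intro z hz
      have h1 := hz.1
      simp only [mem_Ioi]
      linarith
    have := lt_of_lt_of_le hBpos (le_trans (measure_mono hsub) (le_of_eq hall))
    exact lt_irrefl 0 this
  have hM0 : Mm ≠ 0 := by
    intro h0
    rw [hMm] at h0
    have hall : ∀ j, μ j (Iic (d j)) = 0 :=
      fun j => Finset.sum_eq_zero_iff.mp h0 j (Finset.mem_univ _)
    have hdeqA : ∀ j, d j = Alow (μ j) := by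
      intro j
      refine le_antisymm ?_ (hdA j)
      by_contra hb
      push_neg at hb
      have hApos := Alow_mem_supp hμ j (d j - Alow (μ j)) (by linarith)
      have hsub : Ioo (Alow (μ j) - (d j - Alow (μ j)))
          (Alow (μ j) + (d j - Alow (μ j))) ⊆ Iic (d j) := by
        intro z hz
        have h2 := hz.2
        simp only [mem_Iic]
        linarith
      have := lt_of_lt_of_le hApos (le_trans (measure_mono hsub) (le_of_eq (hall j)))
      exact lt_irrefl 0 this
    apply hgen.2.2
    refine ⟨fun j => Alow (μ j), fun j => supp_subset hμ j (Alow_mem_supp hμ j), ?_⟩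
    intro i j hij
    have h1 : Alow (μ j) ≤ S.f i (Alow (μ i)) :=
      Alow_le_of_mem hμ (supp_invariant hμ hij (Alow_mem_supp hμ i))
    have h2 := hstep i j hij
    rw [hdeqA i, hdeqA j] at h2
    exact le_antisymm h2 h1
  -- the two normalized stationary measures
  have hstat1 : IsStationary S (fun j => R⁻¹ • (μ j).restrict (Ioi (d j))) := by
    refine ⟨fun j => ⟨?_⟩, ?_, fun j => ?_, fun j => ?_⟩
    · show (R⁻¹ • (μ j).restrict (Ioi (d j))) univ < ⊤
      rw [MeasureTheory.Measure.smul_apply, MeasureTheory.Measure.restrict_apply_univ,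
        smul_eq_mul]
      exact ENNReal.mul_lt_top (ENNReal.inv_lt_top.mpr (pos_iff_ne_zero.mpr hR0))
        (lt_of_le_of_lt (measure_mono (subset_univ _)) (lt_top_iff_ne_top.mpr (hfinU j)))
    · show ∑ l, (R⁻¹ • (μ l).restrict (Ioi (d l))) univ = 1
      have heach : ∀ l : Fin N, (R⁻¹ • (μ l).restrict (Ioi (d l))) univ
          = R⁻¹ * μ l (Ioi (d l)) := by
        intro l
        rw [MeasureTheory.Measure.smul_apply, MeasureTheory.Measure.restrict_apply_univ,
          smul_eq_mul]
      rw [Finset.sum_congr rfl fun l _ => heach l, ← Finset.mul_sum, ← hR,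
        ENNReal.inv_mul_cancel hR0 hRtop]
    · show (R⁻¹ • (μ j).restrict (Ioi (d j))) (Icc (0:ℝ) 1)ᶜ = 0
      rw [MeasureTheory.Measure.smul_apply,
        MeasureTheory.Measure.restrict_apply measurableSet_Icc.compl, smul_eq_mul]
      have h0 : μ j ((Icc (0:ℝ) 1)ᶜ ∩ Ioi (d j)) = 0 :=
        le_antisymm (le_trans (measure_mono inter_subset_left) (le_of_eq (hnull j)))
          (zero_le)
      rw [h0, mul_zero]
    · show R⁻¹ • (μ j).restrict (Ioi (d j)) = ∑ i, ENNReal.ofReal (S.P i j) •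
        (R⁻¹ • (μ i).restrict (Ioi (d i))).map (S.f i)
      exact stationary_smul (ν := fun l => (μ l).restrict (Ioi (d l))) R⁻¹ hr_eq j
  have hstat2 : IsStationary S (fun j => Mm⁻¹ • (μ j).restrict (Iic (d j))) := by
    refine ⟨fun j => ⟨?_⟩, ?_, fun j => ?_, fun j => ?_⟩
    · show (Mm⁻¹ • (μ j).restrict (Iic (d j))) univ < ⊤
      rw [MeasureTheory.Measure.smul_apply, MeasureTheory.Measure.restrict_apply_univ,
        smul_eq_mul]
      exact ENNReal.mul_lt_top (ENNReal.inv_lt_top.mpr (pos_iff_ne_zero.mpr hM0))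
        (lt_of_le_of_lt (measure_mono (subset_univ _)) (lt_top_iff_ne_top.mpr (hfinU j)))
    · show ∑ l, (Mm⁻¹ • (μ l).restrict (Iic (d l))) univ = 1
      have heach : ∀ l : Fin N, (Mm⁻¹ • (μ l).restrict (Iic (d l))) univ
          = Mm⁻¹ * μ l (Iic (d l)) := by
        intro l
        rw [MeasureTheory.Measure.smul_apply, MeasureTheory.Measure.restrict_apply_univ,
          smul_eq_mul]
      rw [Finset.sum_congr rfl fun l _ => heach l, ← Finset.mul_sum, ← hMm,
        ENNReal.inv_mul_cancel hM0 hMtop]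
    · show (Mm⁻¹ • (μ j).restrict (Iic (d j))) (Icc (0:ℝ) 1)ᶜ = 0
      rw [MeasureTheory.Measure.smul_apply,
        MeasureTheory.Measure.restrict_apply measurableSet_Icc.compl, smul_eq_mul]
      have h0 : μ j ((Icc (0:ℝ) 1)ᶜ ∩ Iic (d j)) = 0 :=
        le_antisymm (le_trans (measure_mono inter_subset_left) (le_of_eq (hnull j)))
          (zero_le)
      rw [h0, mul_zero]
    · show Mm⁻¹ • (μ j).restrict (Iic (d j)) = ∑ i, ENNReal.ofReal (S.P i j) •
        (Mm⁻¹ • (μ i).restrict (Iic (d i))).map (S.f i)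
      exact stationary_smul (ν := fun l => (μ l).restrict (Iic (d l))) Mm⁻¹ hm_eq j
  have h1M : (1:ℝ≥0∞) - R = Mm := ENNReal.sub_eq_of_eq_add_rev hRtop hRM.symm
  have hdec : ∀ j : Fin N, μ j = R • (fun l => R⁻¹ • (μ l).restrict (Ioi (d l))) j
      + ((1:ℝ≥0∞) - R) • (fun l => Mm⁻¹ • (μ l).restrict (Iic (d l))) j := by
    intro j
    show μ j = R • (R⁻¹ • (μ j).restrict (Ioi (d j)))
      + ((1:ℝ≥0∞) - R) • (Mm⁻¹ • (μ j).restrict (Iic (d j)))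
    rw [h1M, smul_smul, smul_smul, ENNReal.mul_inv_cancel hR0 hRtop,
      ENNReal.mul_inv_cancel hM0 hMtop, one_smul, one_smul, ← compl_Ioi]
    exact (MeasureTheory.Measure.restrict_add_restrict_compl measurableSet_Ioi).symm
  have hRpos : (0:ℝ≥0∞) < R := pos_iff_ne_zero.mpr hR0
  have hRlt1 : R < 1 := by
    rw [← hRM]
    exact ENNReal.lt_add_right hRtop hM0
  have heq := hext _ _ hstat1 hstat2 R hRpos hRlt1 hdec
  obtain ⟨j0, hj0⟩ : ∃ j0, μ j0 (Ioi (d j0)) ≠ 0 := by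
    by_contra hc
    push_neg at hc
    exact hR0 (by rw [hR]; exact Finset.sum_eq_zero fun j _ => hc j)
  have h1 := congrFun heq j0
  have hL : (R⁻¹ • (μ j0).restrict (Ioi (d j0))) (Ioi (d j0)) ≠ 0 := by
    rw [MeasureTheory.Measure.smul_apply,
      MeasureTheory.Measure.restrict_apply measurableSet_Ioi, inter_self, smul_eq_mul]
    exact mul_ne_zero (ENNReal.inv_ne_zero.mpr hRtop) hj0
  have hRr : (Mm⁻¹ • (μ j0).restrict (Iic (d j0))) (Ioi (d j0)) = 0 := by
    rw [MeasureTheory.Measure.smul_apply,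
      MeasureTheory.Measure.restrict_apply measurableSet_Ioi, smul_eq_mul]
    have hemp : Ioi (d j0) ∩ Iic (d j0) = ∅ := by
      refine eq_empty_iff_forall_notMem.mpr fun x hx => ?_
      have h1 : d j0 < x := hx.1
      have h2 : x ≤ d j0 := hx.2
      linarith
    rw [hemp, measure_empty, mul_zero]
  rw [h1] at hL
  exact hL hRr

end Statement13Aux


/-- admissible compositions squeezing `I_{μ,k}` into arbitrarily small
neighborhoods of `A_{μ,k'}` and `B_{μ,k'}`. -/
theorem statement13 {N : ℕ} (S : Sys N) (hgen : IsGeneric S)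
    (μ : Fin N → Measure ℝ) (hμ : IsErgodicStationary S μ)
    (k k' : Fin N) (ε : ℝ) (hε : 0 < ε) :
    ∃ lA lB : List (Fin N),
      (2 ≤ lA.length ∧ lA.Chain' (Adm S) ∧ lA.head? = some k ∧ lA.getLast? = some k' ∧
        ∀ x ∈ Icc (Alow (μ k)) (Bhigh (μ k)), |transMap S lA x - Alow (μ k')| < ε) ∧
      (2 ≤ lB.length ∧ lB.Chain' (Adm S) ∧ lB.head? = some k ∧ lB.getLast? = some k' ∧
        ∀ x ∈ Icc (Alow (μ k)) (Bhigh (μ k)), |transMap S lB x - Bhigh (μ k')| < ε) := by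
  have hμs : IsStationary S μ := hμ.1
  have hBk : Bhigh (μ k) ∈ Icc (Alow (μ k)) (Bhigh (μ k)) :=
    ⟨Alow_le_Bhigh hμs k, le_refl _⟩
  have hAk : Alow (μ k) ∈ Icc (Alow (μ k)) (Bhigh (μ k)) :=
    ⟨le_refl _, Alow_le_Bhigh hμs k⟩
  have hlow := key_low hgen hμ k k'
  obtain ⟨yA, hyAmem, hyAlt⟩ : ∃ y ∈ WSet S k k' (Bhigh (μ k)), y < Alow (μ k') + ε :=
    exists_lt_of_csInf_lt (WSet_nonempty S k k' _) (lt_of_le_of_lt hlow (by linarith))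
  obtain ⟨gA, hgA, hgAy⟩ := hyAmem
  obtain ⟨lA, hAlen, hAch, hAhd, hAlast, hAw⟩ := reachF_build_list hgA
  have hhigh := key_high hgen hμ k k'
  obtain ⟨yB, hyBmem, hyBgt⟩ : ∃ y ∈ WSet S k k' (Alow (μ k)), Bhigh (μ k') - ε < y :=
    exists_lt_of_lt_csSup (WSet_nonempty S k k' _) (lt_of_lt_of_le (by linarith) hhigh)
  obtain ⟨gB, hgB, hgBy⟩ := hyBmem
  obtain ⟨lB, hBlen, hBch, hBhd, hBlast, hBw⟩ := reachF_build_list hgB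
  refine ⟨lA, lB, ⟨hAlen, hAch, hAhd, hAlast, ?_⟩, ⟨hBlen, hBch, hBhd, hBlast, ?_⟩⟩
  · intro x hx
    rw [hAw x, abs_lt]
    have h1 : gA x ∈ Icc (Alow (μ k')) (Bhigh (μ k')) := reachF_interval hμs hgA hx
    have h2 : gA x ≤ gA (Bhigh (μ k)) := reachF_mono hμs hgA hx hBk hx.2
    rw [hgAy] at h2
    exact ⟨by linarith [h1.1], by linarith⟩
  · intro x hx
    rw [hBw x, abs_lt]
    have h1 : gB x ∈ Icc (Alow (μ k')) (Bhigh (μ k')) := reachF_interval hμs hgB hx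
    have h2 : gB (Alow (μ k)) ≤ gB x := reachF_mono hμs hgB hAk hx hx.1
    rw [hgBy] at h2
    exact ⟨by linarith, by linarith [h1.2]⟩

end PaperSSP
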